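/- Let x and y be integers with gcd(x, y) = 1 and let p be a prime number. Then the gcd of x − y and P_p(x, y) = Σ_{i=0}^{p−1} x^{p−1−i} y^i is either 1 or p. -/

import Mathlib

theorem stmt_6 (x y : ℤ) (hxy : Int.gcd x y = 1) (p : ℕ) (hp : Nat.Prime p) :
    Int.gcd (x - y) (∑ i ∈ Finset.range p, x ^ (p - 1 - i) * y ^ i) = 1 ∨
      Int.gcd (x - y) (∑ i ∈ Finset.range p, x ^ (p - 1 - i) * y ^ i) = p := by
  set S := ∑ i ∈ Finset.range p, x ^ (p - 1 - i) * y ^ i with hS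
  set d := Int.gcd (x - y) S with hd
  -- (x - y) ∣ S - p * x^(p-1)
  have hdvd : (x - y) ∣ S - (p : ℤ) * x ^ (p - 1) := by
    have : (p : ℤ) * x ^ (p - 1) = ∑ _i ∈ Finset.range p, x ^ (p - 1) := by
      simp [mul_comm]
    rw [this, hS, ← Finset.sum_sub_distrib]
    refine Finset.dvd_sum fun i hi => ?_
    have hip : i < p := Finset.mem_range.mp hi
    have hexp : p - 1 - i + i = p - 1 := by omega
    have : x ^ (p - 1 - i) * y ^ i - x ^ (p - 1) =
        x ^ (p - 1 - i) * (y ^ i - x ^ i) := by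
      rw [mul_sub, ← pow_add, hexp]
    rw [this]
    exact Dvd.dvd.mul_left ((dvd_sub_comm).mp (sub_dvd_pow_sub_pow x y i)) _
  have hdxy : (d : ℤ) ∣ x - y := Int.gcd_dvd_left _ _
  have hdS : (d : ℤ) ∣ S := Int.gcd_dvd_right _ _
  have hdp : (d : ℤ) ∣ (p : ℤ) * x ^ (p - 1) := by
    have := dvd_sub hdS (dvd_trans hdxy hdvd)
    simpa using this
  -- coprimality
  have hco : IsCoprime x y := Int.isCoprime_iff_gcd_eq_one.mpr hxy
  have hco2 : IsCoprime (x - y) x := by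
    have := (hco.neg_right).add_mul_left_right 1
    simpa [sub_eq_add_neg, add_comm] using this.symm
  have hco3 : IsCoprime (d : ℤ) (x ^ (p - 1)) :=
    (IsCoprime.of_isCoprime_of_dvd_left (hco2.pow_right) hdxy)
  have hdvdp : (d : ℤ) ∣ (p : ℤ) := hco3.dvd_of_dvd_mul_right hdp
  have : d ∣ p := Int.ofNat_dvd.mp hdvdp
  exact hp.eq_one_or_self_of_dvd d this
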